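/- Sorting a subset into the target order strictly decreases the inversion count: Let L and o* be linear orders on a finite set X, and let T ⊆ X with |T| ≥ 2 be such that the elements of T do not appear in L in the relative order prescribed by o*. Let σ be the unique permutation of T such that in L⊙σ the elements of T appear in the relative order prescribed by o*. Then Inv_{o*}(L⊙σ) < Inv_{o*}(L). -/
import Mathlib

noncomputable section

/-- A linear order on a finite set `X`, encoded as a rank bijection `X ≃ Fin |X|`
(smaller rank = more preferred / earlier). `L x < L y` means `x ≻_L y`. -/
abbrev RankOrd (X : Type*) [Fintype X] := X ≃ Fin (Fintype.card X)

/-- `L ⊙ σ` : the linear order with `s₁ ≻_{L⊙σ} s₂` iff `σ⁻¹ s₁ ≻_L σ⁻¹ s₂`,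
i.e. the rank of `x` in `L ⊙ σ` is the rank of `σ⁻¹ x` in `L`. -/
def odotLin {X : Type*} [Fintype X] (L : RankOrd X) (σ : Equiv.Perm X) : RankOrd X :=
  σ.symm.trans L

/-- Inversion count `Inv_{ostar}(L)`: the number of (unordered) pairs ranked oppositely
by `L` and by `ostar`, counted here as ordered pairs `(x, y)` with `x ≻_{ostar} y` and
`y ≻_L x`. -/
def invCount {X : Type*} [Fintype X] [DecidableEq X] (ostar L : RankOrd X) : ℕ :=
  (Finset.univ.filter fun p : X × X => ostar p.1 < ostar p.2 ∧ L p.2 < L p.1).card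

/-- Two "downward closed" (relative to each other) finsets in a linear key order
are comparable. -/
lemma aux_chain {X : Type*} {β : Type*} [LinearOrder β] (k : X → β)
    (S B : Finset X)
    (hS : ∀ s ∈ S, ∀ b ∈ B, k b < k s → b ∈ S)
    (hB : ∀ b ∈ B, ∀ s ∈ S, k s < k b → s ∈ B)
    (hk : ∀ s ∈ S, ∀ b ∈ B, k s = k b → s = b) :
    S ⊆ B ∨ B ⊆ S := by
  by_contra h
  push_neg at h
  obtain ⟨hSB, hBS⟩ := h
  obtain ⟨s, hs, hsB⟩ := Finset.not_subset.mp hSB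
  obtain ⟨b, hb, hbS⟩ := Finset.not_subset.mp hBS
  rcases lt_trichotomy (k s) (k b) with hlt | heq | hgt
  · exact hsB (hB b hb s hs hlt)
  · exact hsB (hk s hs b hb heq ▸ hb)
  · exact hbS (hS s hs b hb hgt)

/-- Discordance count between a fixed `y` and all of `T`, as a symmetric difference. -/
lemma disc_card {X : Type*} [Fintype X] [DecidableEq X] (ostar M : RankOrd X)
    (T : Finset X) (y : X) (hy : y ∉ T) :
    ∑ t ∈ T, ((if ostar t < ostar y ∧ M y < M t then 1 else 0)
        + (if ostar y < ostar t ∧ M t < M y then 1 else 0))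
      = ((T.filter fun t => ostar t < ostar y) \ (T.filter fun t => M t < M y)).card
        + ((T.filter fun t => M t < M y) \ (T.filter fun t => ostar t < ostar y)).card := by
  set B := T.filter fun t => ostar t < ostar y with hB
  set W := T.filter fun t => M t < M y with hW
  have hdisj : Disjoint (B \ W) (W \ B) := by
    refine Finset.disjoint_left.mpr ?_
    intro a ha hb
    simp only [Finset.mem_sdiff] at ha hb
    exact ha.2 hb.1
  rw [← Finset.card_union_of_disjoint hdisj]
  have hrw : ((B \ W) ∪ (W \ B)).card = ∑ t ∈ T,
      (if t ∈ (B \ W) ∪ (W \ B) then 1 else 0) := by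
    rw [← Finset.card_filter]
    congr 1
    rw [Finset.filter_mem_eq_inter]
    refine (Finset.inter_eq_right.mpr ?_).symm
    intro a ha
    simp only [Finset.mem_union, Finset.mem_sdiff, hB, hW, Finset.mem_filter] at ha
    rcases ha with ⟨⟨h, _⟩, _⟩ | ⟨⟨h, _⟩, _⟩ <;> exact h
  rw [hrw]
  refine (Finset.sum_congr rfl ?_).symm
  intro t ht
  have hty : t ≠ y := fun h => hy (h ▸ ht)
  have ho : ostar t ≠ ostar y := fun h => hty (ostar.injective h)
  have hm : M t ≠ M y := fun h => hty (M.injective h)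
  have hmem : t ∈ (B \ W) ∪ (W \ B) ↔
      ((ostar t < ostar y ∧ M y < M t) ∨ (ostar y < ostar t ∧ M t < M y)) := by
    simp only [Finset.mem_union, Finset.mem_sdiff, hB, hW, Finset.mem_filter, ht, true_and]
    constructor
    · rintro (⟨h1, h2⟩ | ⟨h1, h2⟩)
      · exact Or.inl ⟨h1, lt_of_le_of_ne (not_lt.mp h2) (Ne.symm hm)⟩
      · exact Or.inr ⟨lt_of_le_of_ne (not_lt.mp h2) (Ne.symm ho), h1⟩
    · rintro (⟨h1, h2⟩ | ⟨h1, h2⟩)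
      · exact Or.inl ⟨h1, not_lt.mpr h2.le⟩
      · exact Or.inr ⟨h2, not_lt.mpr h1.le⟩
  by_cases hc : t ∈ (B \ W) ∪ (W \ B)
  · obtain h := hmem.mp hc
    rw [if_pos hc]
    rcases h with ⟨h1, h2⟩ | ⟨h1, h2⟩
    · rw [if_pos ⟨h1, h2⟩, if_neg (fun hq => absurd h1 (asymm hq.1))]
    · rw [if_neg (fun hq => absurd h1 (asymm hq.1)), if_pos ⟨h1, h2⟩]
  · rw [if_neg hc]
    obtain h := hmem.not.mp hc
    push_neg at h
    rw [if_neg (fun hq => absurd hq.2 (not_lt.mpr (h.1 hq.1))),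
      if_neg (fun hq => absurd hq.2 (not_lt.mpr (h.2 hq.1)))]

/-- Mixed-pair inversions (one element in `T`, the other a fixed `y ∉ T`) do not
increase after sorting `T`. -/
lemma mixed_le {X : Type*} [Fintype X] [DecidableEq X]
    (L ostar : RankOrd X) (T : Finset X)
    (σ : Equiv.Perm X) (hfix : ∀ x : X, x ∉ T → σ x = x)
    (hsorted : ∀ x ∈ T, ∀ y ∈ T, ostar x < ostar y → odotLin L σ x < odotLin L σ y)
    (y : X) (hy : y ∉ T) :
    ∑ t ∈ T, ((if ostar t < ostar y ∧ odotLin L σ y < odotLin L σ t then 1 else 0)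
        + (if ostar y < ostar t ∧ odotLin L σ t < odotLin L σ y then 1 else 0))
      ≤ ∑ t ∈ T, ((if ostar t < ostar y ∧ L y < L t then 1 else 0)
        + (if ostar y < ostar t ∧ L t < L y then 1 else 0)) := by
  set M := odotLin L σ with hMdef
  have hsymm_fix : ∀ x : X, x ∉ T → σ.symm x = x := by
    intro x hx
    have h := congrArg σ.symm (hfix x hx)
    rw [Equiv.symm_apply_apply] at h
    exact h.symm
  have hMapp : ∀ x, M x = L (σ.symm x) := fun x => rfl
  have hMy : M y = L y := by rw [hMapp, hsymm_fix y hy]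
  have hσT : ∀ t ∈ T, σ t ∈ T := by
    intro t ht
    by_contra h
    have h2 := hfix _ h
    exact h ((σ.injective h2).symm ▸ ht)
  have hσsT : ∀ t ∈ T, σ.symm t ∈ T := by
    intro t ht
    by_contra h
    have h2 := hfix _ h
    rw [Equiv.apply_symm_apply] at h2
    exact h (h2 ▸ ht)
  rw [disc_card ostar M T y hy, disc_card ostar L T y hy]
  set B := T.filter fun t => ostar t < ostar y with hB
  set W := T.filter fun t => L t < L y with hW
  set W' := T.filter fun t => M t < M y with hW'
  -- card of W' equals card of W
  have hWcard : W'.card = W.card := by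
    apply Finset.card_bij' (fun t _ => σ.symm t) (fun t _ => σ t)
    · intro t ht
      simp only [hW', Finset.mem_filter] at ht
      simp only [hW, Finset.mem_filter]
      refine ⟨hσsT t ht.1, ?_⟩
      have := ht.2
      rwa [hMapp, hMy] at this
    · intro t ht
      simp only [hW, Finset.mem_filter] at ht
      simp only [hW', Finset.mem_filter]
      refine ⟨hσT t ht.1, ?_⟩
      rw [hMapp, hMy, Equiv.symm_apply_apply]
      exact ht.2
    · intro t _; exact Equiv.apply_symm_apply σ t
    · intro t _; exact Equiv.symm_apply_apply σ t
  -- intersection of W' with B is at least that of W with B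
  have hinter : (W ∩ B).card ≤ (W' ∩ B).card := by
    have hchain : W' ⊆ B ∨ B ⊆ W' := by
      apply aux_chain (fun x => ostar x)
      · intro s hs b hb hlt
        simp only [hW', Finset.mem_filter] at hs ⊢
        simp only [hB, Finset.mem_filter] at hb
        exact ⟨hb.1, lt_trans (hsorted b hb.1 s hs.1 hlt) hs.2⟩
      · intro b hb s hs hlt
        simp only [hB, Finset.mem_filter] at hb ⊢
        simp only [hW', Finset.mem_filter] at hs
        exact ⟨hs.1, lt_trans hlt hb.2⟩
      · intro s _ b _ h
        exact ostar.injective h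
    rcases hchain with h | h
    · rw [Finset.inter_eq_left.mpr h, hWcard]
      exact Finset.card_le_card Finset.inter_subset_left
    · rw [Finset.inter_eq_right.mpr h]
      exact Finset.card_le_card Finset.inter_subset_right
  have e1 : (W' ∩ B).card + (W' \ B).card = W'.card := Finset.card_inter_add_card_sdiff _ _
  have e2 : (W ∩ B).card + (W \ B).card = W.card := Finset.card_inter_add_card_sdiff _ _
  have e3 : (B ∩ W').card + (B \ W').card = B.card := Finset.card_inter_add_card_sdiff _ _
  have e4 : (B ∩ W).card + (B \ W).card = B.card := Finset.card_inter_add_card_sdiff _ _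
  have c1 : (B ∩ W').card = (W' ∩ B).card := by rw [Finset.inter_comm]
  have c2 : (B ∩ W).card = (W ∩ B).card := by rw [Finset.inter_comm]
  omega

/-- **Sorting a subset into the target order strictly decreases the inversion count.**
Let `L` and `ostar` be linear orders on a finite set `X`, and `T ⊆ X` with `|T| ≥ 2` whose
elements do not appear in `L` in the relative order prescribed by `ostar`. If `σ` is a
permutation of `T` (fixing everything outside `T`) such that in `L ⊙ σ` the elements of
`T` appear in the relative order prescribed by `ostar`, then
`Inv_{ostar}(L ⊙ σ) < Inv_{ostar}(L)`. -/
theorem sorting_subset_decreases_inversions {X : Type*} [Fintype X] [DecidableEq X]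
    (L ostar : RankOrd X) (T : Finset X) (hT : 2 ≤ T.card)
    (hunsorted : ∃ x ∈ T, ∃ y ∈ T, ostar x < ostar y ∧ L y < L x)
    (σ : Equiv.Perm X) (hfix : ∀ x : X, x ∉ T → σ x = x)
    (hsorted : ∀ x ∈ T, ∀ y ∈ T, ostar x < ostar y → odotLin L σ x < odotLin L σ y) :
    invCount ostar (odotLin L σ) < invCount ostar L := by
  classical
  set M := odotLin L σ with hMdef
  set F : RankOrd X → X → X → ℕ :=
    fun N x y => if ostar x < ostar y ∧ N y < N x then 1 else 0 with hF
  -- decomposition of the inversion count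
  have hinv : ∀ N : RankOrd X, invCount ostar N =
      (∑ x ∈ T, ∑ y ∈ T, F N x y)
        + (∑ y ∈ Tᶜ, ∑ t ∈ T, (F N t y + F N y t))
        + (∑ x ∈ Tᶜ, ∑ y ∈ Tᶜ, F N x y) := by
    intro N
    have h0 : invCount ostar N = ∑ x : X, ∑ y : X, F N x y := by
      rw [invCount, Finset.card_filter, Fintype.sum_prod_type]
    have h1 : ∀ (s : Finset X) (g : X → X → ℕ),
        ∑ x ∈ s, ∑ y : X, g x y = ∑ x ∈ s, ∑ y ∈ T, g x y + ∑ x ∈ s, ∑ y ∈ Tᶜ, g x y := by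
      intro s g
      rw [← Finset.sum_add_distrib]
      exact Finset.sum_congr rfl fun x _ => (Finset.sum_add_sum_compl T _).symm
    rw [h0, ← Finset.sum_add_sum_compl T (fun x => ∑ y : X, F N x y), h1, h1]
    have hswap : ∑ x ∈ T, ∑ y ∈ Tᶜ, F N x y = ∑ y ∈ Tᶜ, ∑ x ∈ T, F N x y :=
      Finset.sum_comm
    have hmid : ∑ y ∈ Tᶜ, ∑ t ∈ T, (F N t y + F N y t)
        = ∑ y ∈ Tᶜ, ∑ t ∈ T, F N t y + ∑ y ∈ Tᶜ, ∑ t ∈ T, F N y t := by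
      rw [← Finset.sum_add_distrib]
      exact Finset.sum_congr rfl fun y _ => Finset.sum_add_distrib
    rw [hmid, hswap]
    ring
  rw [hinv M, hinv L]
  -- within-T inversions after sorting: zero
  have htt' : (∑ x ∈ T, ∑ y ∈ T, F M x y) = 0 := by
    apply Finset.sum_eq_zero
    intro x hx
    apply Finset.sum_eq_zero
    intro y hy
    simp only [hF]
    rw [if_neg]
    rintro ⟨h1, h2⟩
    exact absurd (hsorted x hx y hy h1) (asymm h2)
  -- within-T inversions before sorting: at least one
  have htt : 1 ≤ ∑ x ∈ T, ∑ y ∈ T, F L x y := by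
    obtain ⟨a, ha, b, hb, h1, h2⟩ := hunsorted
    have hb1 : 1 ≤ ∑ y ∈ T, F L a y := by
      have : F L a b = 1 := by simp only [hF]; rw [if_pos ⟨h1, h2⟩]
      calc 1 = F L a b := this.symm
        _ ≤ ∑ y ∈ T, F L a y := Finset.single_le_sum (fun i _ => Nat.zero_le _) hb
    calc 1 ≤ ∑ y ∈ T, F L a y := hb1
      _ ≤ ∑ x ∈ T, ∑ y ∈ T, F L x y :=
        Finset.single_le_sum (f := fun x => ∑ y ∈ T, F L x y) (fun i _ => Nat.zero_le _) ha
  -- mixed inversions do not increase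
  have hmix : (∑ y ∈ Tᶜ, ∑ t ∈ T, (F M t y + F M y t))
      ≤ ∑ y ∈ Tᶜ, ∑ t ∈ T, (F L t y + F L y t) := by
    apply Finset.sum_le_sum
    intro y hy
    exact mixed_le L ostar T σ hfix hsorted y (Finset.mem_compl.mp hy)
  -- outside-outside inversions are unchanged
  have hoo : (∑ x ∈ Tᶜ, ∑ y ∈ Tᶜ, F M x y) = ∑ x ∈ Tᶜ, ∑ y ∈ Tᶜ, F L x y := by
    have hsymm_fix : ∀ x : X, x ∉ T → σ.symm x = x := by
      intro x hx
      have h := congrArg σ.symm (hfix x hx)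
      rw [Equiv.symm_apply_apply] at h
      exact h.symm
    refine Finset.sum_congr rfl fun x hx => Finset.sum_congr rfl fun y hy => ?_
    have hMx : M x = L x := by
      show L (σ.symm x) = L x
      rw [hsymm_fix x (Finset.mem_compl.mp hx)]
    have hMy : M y = L y := by
      show L (σ.symm y) = L y
      rw [hsymm_fix y (Finset.mem_compl.mp hy)]
    simp only [hF, hMx, hMy]
  omega
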